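/- Let n ≥ 2 and let ε : ZMod n → ℤ take values in {1, -1} with ∑ i, ε i = 1. Consider the process of repeatedly deleting all cyclically adjacent (+1, -1) 'inner' pairs simultaneously (i.e., passing from C_j to C_{j+1} by removing, for each maximal inner annulus, its two boundary signs). Then the sum of the remaining signs is preserved at each step, the length strictly decreases at each step while it exceeds 1, and the process terminates with a single entry equal to +1 after at most (n-1)/2 steps. -/

import Mathlib

/-- Position `i` of the list `l`, read cyclically, is the start of an "inner annulus":
the entry there is `+1` and the (cyclically) next entry is `-1`. -/
def CyclicInnerStart (l : List ℤ) (i : Fin l.length) : Prop :=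
  l.get i = 1 ∧ l.get ⟨((i : ℕ) + 1) % l.length, Nat.mod_lt _ i.pos⟩ = -1

instance (l : List ℤ) (i : Fin l.length) : Decidable (CyclicInnerStart l i) := by
  unfold CyclicInnerStart; infer_instance

/-- Delete, simultaneously, both entries of every cyclically adjacent `(+1, -1)` pair
(the boundary signs of every inner annulus) of the list `l`. -/
def delAllInner (l : List ℤ) : List ℤ :=
  (List.finRange l.length).filterMap fun i =>
    if CyclicInnerStart l i ∨
        ∃ j : Fin l.length, CyclicInnerStart l j ∧ (i : ℕ) = ((j : ℕ) + 1) % l.length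
    then none else some (l.get i)

namespace DelAllInnerAux

/-- Cyclic successor on `Fin k`. -/
def fsucc {k : ℕ} (i : Fin k) : Fin k := ⟨((i : ℕ) + 1) % k, Nat.mod_lt _ i.pos⟩

lemma fsucc_val_eq {k : ℕ} (i : Fin k) :
    ((fsucc i : Fin k) : ℕ) = if (i : ℕ) + 1 = k then 0 else (i : ℕ) + 1 := by
  show ((i : ℕ) + 1) % k = _
  split
  · next h => rw [h, Nat.mod_self]
  · next h => exact Nat.mod_eq_of_lt (by have := i.isLt; omega)

lemma fsucc_injective {k : ℕ} : Function.Injective (fsucc (k := k)) := by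
  intro a b hab
  have h := congrArg (fun x : Fin k => (x : ℕ)) hab
  simp only [fsucc_val_eq] at h
  have ha := a.isLt
  have hb := b.isLt
  apply Fin.ext
  split at h <;> split at h <;> omega

lemma cis_snd {l : List ℤ} {i : Fin l.length} (h : CyclicInnerStart l i) :
    l.get (fsucc i) = -1 := h.2

lemma fm_sum {α M : Type*} [AddCommMonoid M] (l : List α) (p : α → Prop) [DecidablePred p]
    (g : α → M) :
    (l.filterMap (fun i => if p i then none else some (g i))).sum
      = (l.map (fun i => if p i then 0 else g i)).sum := by
  induction l with
  | nil => rfl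
  | cons a t ih => by_cases h : p a <;> simp [List.filterMap_cons, h, ih]

lemma fm_len {α : Type*} (l : List α) (p : α → Prop) [DecidablePred p] (g : α → ℤ) :
    (l.filterMap (fun i => if p i then none else some (g i))).length
      = (l.map (fun i => if p i then (0 : ℕ) else 1)).sum := by
  induction l with
  | nil => rfl
  | cons a t ih => by_cases h : p a <;> simp [List.filterMap_cons, h, ih] <;> omega

lemma sum_eq_sum_get (l : List ℤ) : l.sum = ∑ i : Fin l.length, l.get i := by
  conv_lhs => rw [← List.ofFn_get l]
  rw [List.sum_ofFn]

/-- The set of starts of inner annuli. -/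
def Sset (l : List ℤ) : Finset (Fin l.length) :=
  Finset.univ.filter (fun i => CyclicInnerStart l i)

/-- The set of deleted indices. -/
def Rset (l : List ℤ) : Finset (Fin l.length) :=
  Sset l ∪ (Sset l).image fsucc

lemma cond_iff_mem (l : List ℤ) (i : Fin l.length) :
    (CyclicInnerStart l i ∨
        ∃ j : Fin l.length, CyclicInnerStart l j ∧ (i : ℕ) = ((j : ℕ) + 1) % l.length)
      ↔ i ∈ Rset l := by
  simp only [Rset, Sset, Finset.mem_union, Finset.mem_filter, Finset.mem_univ, true_and,
    Finset.mem_image]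
  apply or_congr Iff.rfl
  constructor
  · rintro ⟨j, hj, hij⟩
    exact ⟨j, hj, Fin.ext hij.symm⟩
  · rintro ⟨j, hj, rfl⟩
    exact ⟨j, hj, rfl⟩

lemma disjoint_S_image (l : List ℤ) : Disjoint (Sset l) ((Sset l).image fsucc) := by
  rw [Finset.disjoint_left]
  intro i hi hi'
  simp only [Sset, Finset.mem_filter, Finset.mem_univ, true_and, Finset.mem_image] at hi hi'
  obtain ⟨j, hj, rfl⟩ := hi'
  have := cis_snd hj
  rw [hi.1] at this
  omega

lemma sum_Rset (l : List ℤ) : ∑ i ∈ Rset l, l.get i = 0 := by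
  rw [Rset, Finset.sum_union (disjoint_S_image l),
    Finset.sum_image (fun a _ b _ hab => fsucc_injective hab)]
  have h1 : ∑ i ∈ Sset l, l.get i = (Sset l).card • (1 : ℤ) := by
    rw [← Finset.sum_const]
    refine Finset.sum_congr rfl (fun i hi => ?_)
    simp only [Sset, Finset.mem_filter] at hi
    exact hi.2.1
  have h2 : ∑ i ∈ Sset l, l.get (fsucc i) = (Sset l).card • (-1 : ℤ) := by
    rw [← Finset.sum_const]
    refine Finset.sum_congr rfl (fun i hi => ?_)
    simp only [Sset, Finset.mem_filter] at hi
    exact cis_snd hi.2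
  rw [h1, h2]
  simp

lemma card_Rset (l : List ℤ) : (Rset l).card = 2 * (Sset l).card := by
  rw [Rset, Finset.card_union_of_disjoint (disjoint_S_image l),
    Finset.card_image_of_injective _ fsucc_injective]
  ring

lemma sum_delAllInner (l : List ℤ) : (delAllInner l).sum = l.sum := by
  unfold delAllInner
  rw [fm_sum, ← Fin.sum_univ_def]
  simp only [cond_iff_mem l]
  rw [sum_eq_sum_get]
  have key : ∀ i : Fin l.length, (if i ∈ Rset l then (0 : ℤ) else l.get i)
      = l.get i - (if i ∈ Rset l then l.get i else 0) := by
    intro i; by_cases h : i ∈ Rset l <;> simp [h]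
  rw [Finset.sum_congr rfl (fun i _ => key i), Finset.sum_sub_distrib,
    Finset.sum_ite_mem, Finset.univ_inter, sum_Rset]
  ring

lemma len_delAllInner (l : List ℤ) :
    (delAllInner l).length + 2 * (Sset l).card = l.length := by
  unfold delAllInner
  rw [fm_len _ _ (fun i => l.get i), ← Fin.sum_univ_def]
  simp only [cond_iff_mem l]
  have key : ∑ i : Fin l.length,
      ((if i ∈ Rset l then (0 : ℕ) else 1) + (if i ∈ Rset l then 1 else 0)) = l.length := by
    have h1 : ∀ i : Fin l.length,
        (if i ∈ Rset l then (0 : ℕ) else 1) + (if i ∈ Rset l then 1 else 0) = 1 := by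
      intro i; by_cases h : i ∈ Rset l <;> simp [h]
    rw [Finset.sum_congr rfl (fun i _ => h1 i), Finset.sum_const, smul_eq_mul, mul_one,
      Finset.card_univ, Fintype.card_fin]
  rw [Finset.sum_add_distrib] at key
  have hsum : ∑ i : Fin l.length, (if i ∈ Rset l then (1 : ℕ) else 0) = (Rset l).card := by
    rw [Finset.sum_ite_mem, Finset.univ_inter, Finset.sum_const, smul_eq_mul, mul_one]
  rw [hsum] at key
  have := card_Rset l
  omega

lemma mem_delAllInner {l : List ℤ} {x : ℤ} (hx : x ∈ delAllInner l) : x ∈ l := by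
  unfold delAllInner at hx
  rw [List.mem_filterMap] at hx
  obtain ⟨i, _, hi⟩ := hx
  split at hi
  · exact absurd hi (by simp)
  · obtain rfl : x = l.get i := by injection hi.symm
    exact l.get_mem i

lemma exists_cis (l : List ℤ) (hv : ∀ x ∈ l, x = 1 ∨ x = -1) (hs : l.sum = 1)
    (h1 : 1 < l.length) : ∃ i, CyclicInnerStart l i := by
  by_contra hno
  push_neg at hno
  have hvget : ∀ i : Fin l.length, l.get i = 1 ∨ l.get i = -1 :=
    fun i => hv _ (l.get_mem i)
  have hstep : ∀ i : Fin l.length, l.get i = 1 → l.get (fsucc i) = 1 := by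
    intro i hi
    rcases hvget (fsucc i) with h | h
    · exact h
    · exact absurd ⟨hi, h⟩ (hno i)
  have hex : ∃ i : Fin l.length, l.get i = 1 := by
    by_contra hall
    push_neg at hall
    have hm1 : ∀ i : Fin l.length, l.get i = -1 := by
      intro i; rcases hvget i with h | h
      · exact absurd h (hall i)
      · exact h
    have hsum := sum_eq_sum_get l
    rw [hs, Finset.sum_congr rfl (fun i _ => hm1 i), Finset.sum_const,
      Finset.card_univ, Fintype.card_fin] at hsum
    simp at hsum
    omega
  obtain ⟨i₀, hi₀⟩ := hex
  have hall : ∀ m : ℕ, l.get ⟨((i₀ : ℕ) + m) % l.length, Nat.mod_lt _ i₀.pos⟩ = 1 := by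
    intro m
    induction m with
    | zero => simpa [Nat.mod_eq_of_lt i₀.isLt] using hi₀
    | succ m ih =>
      have := hstep _ ih
      rw [← this]
      congr 1
      apply Fin.ext
      show (((i₀ : ℕ) + (m + 1)) % l.length) = (((i₀ : ℕ) + m) % l.length + 1) % l.length
      rw [Nat.mod_add_mod, Nat.add_assoc]
  have hget1 : ∀ j : Fin l.length, l.get j = 1 := by
    intro j
    have hm := hall (l.length - (i₀ : ℕ) + (j : ℕ))
    have heq : ((i₀ : ℕ) + (l.length - (i₀ : ℕ) + (j : ℕ))) % l.length = (j : ℕ) := by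
      have h1' : (i₀ : ℕ) ≤ l.length := le_of_lt i₀.isLt
      have he : ((i₀ : ℕ) + (l.length - (i₀ : ℕ) + (j : ℕ))) = l.length + (j : ℕ) := by omega
      rw [he, Nat.add_mod_left, Nat.mod_eq_of_lt j.isLt]
    rw [← hm]
    congr 1
    exact Fin.ext heq.symm
  have hsum := sum_eq_sum_get l
  rw [hs, Finset.sum_congr rfl (fun i _ => hget1 i), Finset.sum_const,
    Finset.card_univ, Fintype.card_fin] at hsum
  simp at hsum
  omega

lemma delAllInner_one : delAllInner [1] = [1] := by decide

lemma terminate : ∀ (m : ℕ) (l : List ℤ), (∀ x ∈ l, x = 1 ∨ x = -1) → l.sum = 1 →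
    l.length ≤ 2 * m + 1 → delAllInner^[m] l = [1] := by
  intro m
  induction m with
  | zero =>
    intro l hv hs hlen
    match l with
    | [] => simp at hs
    | [a] => simp at hs; simp [hs]
    | a :: b :: t => simp at hlen
  | succ m ih =>
    intro l hv hs hlen
    rw [Function.iterate_succ_apply]
    by_cases h1 : 1 < l.length
    · obtain ⟨i, hi⟩ := exists_cis l hv hs h1
      have hScard : 0 < (Sset l).card :=
        Finset.card_pos.mpr ⟨i, by simp [Sset, hi]⟩
      have hlen2 := len_delAllInner l
      exact ih _ (fun x hx => hv x (mem_delAllInner hx))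
        (by rw [sum_delAllInner, hs]) (by omega)
    · have hl : l = [1] := by
        match l with
        | [] => simp at hs
        | [a] => simp at hs; simp [hs]
        | a :: b :: t => simp at h1
      rw [hl, delAllInner_one]
      exact ih _ (by simp) (by simp) (by simp)

lemma parity (l : List ℤ) (hv : ∀ x ∈ l, x = 1 ∨ x = -1) :
    (l.length : ℤ) % 2 = l.sum % 2 := by
  induction l with
  | nil => rfl
  | cons a t ih =>
    have ha := hv a (List.mem_cons_self)
    have ih' := ih (fun x hx => hv x (List.mem_cons_of_mem a hx))
    simp only [List.length_cons, List.sum_cons]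
    push_cast
    omega

end DelAllInnerAux

open DelAllInnerAux in
/-- The reduction process `C₀ ⊃ C₁ ⊃ ⋯ ⊃ C_k` of Section 7: starting from `n ≥ 2` cyclic
signs `±1` with signed sum `1`, repeatedly delete all cyclically adjacent `(+1, -1)`
pairs simultaneously.  Then the signed sum is preserved at every step, the length
strictly decreases at each step while it exceeds `1`, and the process terminates at the
single-entry list `[1]` after at most `(n-1)/2` steps. -/
theorem delAllInner_process (n : ℕ) [NeZero n] (hn : 2 ≤ n) (ε : ZMod n → ℤ)
    (hval : ∀ i, ε i = 1 ∨ ε i = -1) (hsum : ∑ i, ε i = 1) :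
    let L : List ℤ := List.ofFn fun i : Fin n => ε ((i : ℕ) : ZMod n)
    (∀ j : ℕ, (delAllInner^[j + 1] L).sum = (delAllInner^[j] L).sum) ∧
    (∀ j : ℕ, 1 < (delAllInner^[j] L).length →
      (delAllInner^[j + 1] L).length < (delAllInner^[j] L).length) ∧
    ∃ k ≤ (n - 1) / 2, delAllInner^[k] L = [1] := by
  intro L
  have hlenL : L.length = n := by simp [L]
  have hvL : ∀ x ∈ L, x = 1 ∨ x = -1 := by
    intro x hx
    simp only [L, List.mem_ofFn] at hx
    obtain ⟨i, rfl⟩ := hx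
    exact hval _
  have hsL : L.sum = 1 := by
    have hbij : Function.Bijective (fun i : Fin n => ((i : ℕ) : ZMod n)) := by
      rw [Fintype.bijective_iff_surjective_and_card]
      constructor
      · intro a
        exact ⟨⟨a.val, ZMod.val_lt a⟩, ZMod.natCast_rightInverse a⟩
      · simp [ZMod.card]
    calc L.sum = ∑ i : Fin n, ε ((i : ℕ) : ZMod n) := by simp [L, List.sum_ofFn]
    _ = ∑ a : ZMod n, ε a := Fintype.sum_bijective _ hbij _ _ (fun i => rfl)
    _ = 1 := hsum
  have hgood : ∀ j, (∀ x ∈ delAllInner^[j] L, x = 1 ∨ x = -1) ∧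
      (delAllInner^[j] L).sum = 1 := by
    intro j
    induction j with
    | zero => exact ⟨hvL, hsL⟩
    | succ j ih =>
      rw [Function.iterate_succ_apply']
      exact ⟨fun x hx => ih.1 x (mem_delAllInner hx), by rw [sum_delAllInner, ih.2]⟩
  refine ⟨fun j => ?_, fun j hj => ?_, ?_⟩
  · rw [(hgood (j + 1)).2, (hgood j).2]
  · rw [Function.iterate_succ_apply']
    obtain ⟨hv, hs⟩ := hgood j
    obtain ⟨i, hi⟩ := exists_cis _ hv hs hj
    have h1 : 0 < (Sset (delAllInner^[j] L)).card :=
      Finset.card_pos.mpr ⟨i, by simp [Sset, hi]⟩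
    have h2 := len_delAllInner (delAllInner^[j] L)
    omega
  · refine ⟨(n - 1) / 2, le_refl _, ?_⟩
    have hodd : n % 2 = 1 := by
      have hp := parity L hvL
      rw [hsL, hlenL] at hp
      omega
    exact terminate _ _ hvL hsL (by omega)
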